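/- Let a and b be positive integers with a ≤ b, let k ≥ 2 be an integer, and let p be a nonnegative integer with p ≤ CV_k(K_{a,b}). For the complete bipartite graph K_{a,b}: if a = b = 1 then CM_k(K_{a,b}, p) = 0; if k > 2 and b > 1 then CM_k(K_{a,b}, p) = 0; and if k = 2 and b > 1 then CM_k(K_{a,b}, p) = (a − p)(b − 1). -/

import Mathlib

open SimpleGraph

/-- A graph is in a *failure state* for `k` if every connected component has
diameter less than `k`, i.e. every pair of mutually reachable vertices is at
distance less than `k`. -/
def FailureState {V : Type*} (G : SimpleGraph V) (k : ℕ) : Prop :=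
  ∀ u v : V, G.Reachable u v → G.dist u v < k

/-- `G` contains `m` pairwise vertex-disjoint paths of length `k`. -/
def HasDisjointPaths {V : Type*} (G : SimpleGraph V) (k m : ℕ) : Prop :=
  ∃ (u v : Fin m → V) (P : ∀ i, G.Walk (u i) (v i)),
    (∀ i, (P i).IsPath ∧ (P i).length = k) ∧
    ∀ i j, i ≠ j → ∀ x, x ∈ (P i).support → x ∉ (P j).support

/-- The `k`-diameter component vertex connectivity: the minimum size of a set of
vertices whose deletion leaves every component with diameter less than `k`. -/
noncomputable def CV {V : Type*} (G : SimpleGraph V) (k : ℕ) : ℕ :=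
  sInf {n | ∃ V' : Finset V, V'.card = n ∧
    FailureState (G.induce ((V' : Set V))ᶜ) k}

/-- The `k`-diameter component edge connectivity: the minimum size of a set of
edges whose deletion leaves every component with diameter less than `k`. -/
noncomputable def CE {V : Type*} (G : SimpleGraph V) (k : ℕ) : ℕ :=
  sInf {n | ∃ E' : Finset (Sym2 V), (E' : Set (Sym2 V)) ⊆ G.edgeSet ∧ E'.card = n ∧
    FailureState (G.deleteEdges (E' : Set (Sym2 V))) k}

/-- The `k`-diameter component connectivity function: the minimum over all
`p`-element vertex sets `V'` of `CE k (G - V')`. -/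
noncomputable def CM {V : Type*} (G : SimpleGraph V) (k p : ℕ) : ℕ :=
  sInf {q | ∃ V' : Finset V, V'.card = p ∧
    CE (G.induce ((V' : Set V))ᶜ) k = q}

/-! ### Auxiliary lemmas -/

lemma reach_of_matching {V : Type*} {H : SimpleGraph V}
    (hM : ∀ x y z : V, H.Adj x y → H.Adj x z → y = z) :
    ∀ u v : V, H.Reachable u v → u = v ∨ H.Adj u v := by
  intro u v hr
  obtain ⟨w⟩ := hr
  induction w with
  | nil => exact Or.inl rfl
  | cons h q ih =>
    rcases ih with rfl | hadj
    · exact Or.inr h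
    · exact Or.inl (hM _ _ _ h.symm hadj)

lemma failure_of_matching {V : Type*} {H : SimpleGraph V}
    (hM : ∀ x y z : V, H.Adj x y → H.Adj x z → y = z) :
    FailureState H 2 := by
  intro u v hr
  rcases reach_of_matching hM u v hr with rfl | hadj
  · simp [SimpleGraph.dist_self]
  · have : H.dist u v = 1 := SimpleGraph.dist_eq_one_iff_adj.mpr hadj
    omega

lemma failure_mono {V : Type*} {H : SimpleGraph V} {k k' : ℕ} (h : FailureState H k)
    (hk : k ≤ k') : FailureState H k' :=
  fun u v hr => lt_of_lt_of_le (h u v hr) hk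

lemma cbg_adj {α β : Type*} (u v : α ⊕ β) :
    (completeBipartiteGraph α β).Adj u v ↔ u.isLeft ≠ v.isLeft := by
  cases u <;> cases v <;> simp

/-- Every induced subgraph of a complete bipartite graph is in a failure state for 3. -/
lemma cbg_induce_failure {α β : Type*} (S : Set (α ⊕ β)) :
    FailureState ((completeBipartiteGraph α β).induce S) 3 := by
  set H := (completeBipartiteGraph α β).induce S with hH
  intro u v hr
  by_cases huv : u = v
  · subst huv; simp [SimpleGraph.dist_self]
  by_cases hadj : H.Adj u v
  · have : H.dist u v = 1 := SimpleGraph.dist_eq_one_iff_adj.mpr hadj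
    omega
  obtain ⟨w⟩ := hr
  cases w with
  | nil => exact absurd rfl huv
  | @cons _ m _ h q =>
    have hum : ((u : α ⊕ β)).isLeft ≠ ((m : α ⊕ β)).isLeft := (cbg_adj _ _).mp h
    have huv' : ((u : α ⊕ β)).isLeft = ((v : α ⊕ β)).isLeft := by
      by_contra hne
      exact hadj ((cbg_adj _ _).mpr hne)
    have hmv' : ((m : α ⊕ β)).isLeft ≠ ((v : α ⊕ β)).isLeft := by
      rw [← huv']; exact fun hc => hum hc.symm
    have hmv : H.Adj m v := (cbg_adj (m : α ⊕ β) (v : α ⊕ β)).mpr hmv'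
    have : H.dist u v ≤ 2 := by
      have := SimpleGraph.dist_le (SimpleGraph.Walk.cons h (SimpleGraph.Walk.cons hmv .nil))
      simpa using this
    omega

lemma CE_eq_zero_of_failure {V : Type*} {H : SimpleGraph V} {k : ℕ}
    (h : FailureState H k) : CE H k = 0 := by
  rw [CE, Nat.sInf_eq_zero]
  left
  refine ⟨∅, by simp, by simp, ?_⟩
  simpa [SimpleGraph.deleteEdges_empty] using h

lemma CE_set_nonempty {V : Type*} [Finite V] (H : SimpleGraph V) {k : ℕ} (hk : 2 ≤ k) :
    {n | ∃ E' : Finset (Sym2 V), (E' : Set (Sym2 V)) ⊆ H.edgeSet ∧ E'.card = n ∧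
      FailureState (H.deleteEdges (E' : Set (Sym2 V))) k}.Nonempty := by
  refine ⟨_, (Set.toFinite H.edgeSet).toFinset, by simp, rfl, ?_⟩
  refine failure_mono (failure_of_matching ?_) hk
  intro x y z hxy _
  rw [SimpleGraph.deleteEdges_adj] at hxy
  exact absurd (by simpa using hxy.1) (by simpa using hxy.2)

lemma CV_le (a b k : ℕ) (hk : 2 ≤ k) :
    CV (completeBipartiteGraph (Fin a) (Fin b)) k ≤ a := by
  classical
  set V0 : Finset (Fin a ⊕ Fin b) := (Finset.univ : Finset (Fin a)).image Sum.inl with hV0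
  apply Nat.sInf_le
  refine ⟨V0, ?_, ?_⟩
  · rw [hV0, Finset.card_image_of_injective _ Sum.inl_injective, Finset.card_univ,
      Fintype.card_fin]
  · refine failure_mono (failure_of_matching ?_) hk
    intro x y z hxy _
    exfalso
    have h := (cbg_adj (x : Fin a ⊕ Fin b) (y : Fin a ⊕ Fin b)).mp hxy
    have hmem : ∀ w : {v : Fin a ⊕ Fin b // v ∈ ((V0 : Set (Fin a ⊕ Fin b)))ᶜ},
        (w : Fin a ⊕ Fin b).isLeft = false := by
      rintro ⟨(i | j), hw⟩
      · exact absurd (by simp [hV0] : (Sum.inl i : Fin a ⊕ Fin b) ∈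
          (V0 : Set (Fin a ⊕ Fin b))) hw
      · rfl
    rw [hmem x, hmem y] at h
    exact h rfl

lemma count_lemma {V : Type*} [DecidableEq V] (H : SimpleGraph V)
    (E' : Finset (Sym2 V))
    (hfail : FailureState (H.deleteEdges (E' : Set (Sym2 V))) 2)
    (A B : Finset V)
    (hadj : ∀ u ∈ A, ∀ w ∈ B, H.Adj u w)
    (hnadj : ∀ w₁ ∈ B, ∀ w₂ ∈ B, ¬ H.Adj w₁ w₂) :
    A.card * (B.card - 1) ≤ E'.card := by
  classical
  have hdisj : ∀ x, x ∈ A → x ∉ B := by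
    intro x hxA hxB
    exact H.irrefl (hadj x hxA x hxB)
  have hkey : ∀ u ∈ A, B.card - 1 ≤ (B.filter (fun w => s(u, w) ∈ E')).card := by
    intro u hu
    have hone : (B.filter (fun w => s(u, w) ∉ E')).card ≤ 1 := by
      rw [Finset.card_le_one]
      intro w₁ h₁ w₂ h₂
      by_contra hne
      obtain ⟨hw₁, he₁⟩ := Finset.mem_filter.mp h₁
      obtain ⟨hw₂, he₂⟩ := Finset.mem_filter.mp h₂
      have ha₁ : (H.deleteEdges (E' : Set (Sym2 V))).Adj u w₁ :=
        (SimpleGraph.deleteEdges_adj).mpr ⟨hadj u hu w₁ hw₁, he₁⟩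
      have ha₂ : (H.deleteEdges (E' : Set (Sym2 V))).Adj u w₂ :=
        (SimpleGraph.deleteEdges_adj).mpr ⟨hadj u hu w₂ hw₂, he₂⟩
      have hr : (H.deleteEdges (E' : Set (Sym2 V))).Reachable w₁ w₂ :=
        (ha₁.symm.reachable).trans ha₂.reachable
      have hd := hfail w₁ w₂ hr
      have h0 : (H.deleteEdges (E' : Set (Sym2 V))).dist w₁ w₂ ≠ 0 := by
        rw [SimpleGraph.dist_ne_zero_iff_ne_and_reachable]
        exact ⟨hne, hr⟩
      have h1 : (H.deleteEdges (E' : Set (Sym2 V))).dist w₁ w₂ ≠ 1 := by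
        intro hc
        have := SimpleGraph.dist_eq_one_iff_adj.mp hc
        exact hnadj w₁ hw₁ w₂ hw₂ (this.1)
      omega
    have := Finset.card_filter_add_card_filter_not
      (s := B) (p := fun w => s(u, w) ∈ E')
    omega
  set T : Finset (Sym2 V) :=
    A.biUnion (fun u => (B.filter (fun w => s(u, w) ∈ E')).image (fun w => s(u, w))) with hT
  have hTsub : T ⊆ E' := by
    intro e he
    obtain ⟨u, hu, he⟩ := Finset.mem_biUnion.mp he
    obtain ⟨w, hw, rfl⟩ := Finset.mem_image.mp he
    exact (Finset.mem_filter.mp hw).2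
  have hcard : A.card * (B.card - 1) ≤ T.card := by
    rw [hT, Finset.card_biUnion]
    · calc A.card * (B.card - 1) = ∑ _u ∈ A, (B.card - 1) := by
            rw [Finset.sum_const, smul_eq_mul, mul_comm]
          _ ≤ ∑ u ∈ A, ((B.filter (fun w => s(u, w) ∈ E')).image (fun w => s(u, w))).card := by
            apply Finset.sum_le_sum
            intro u hu
            rw [Finset.card_image_of_injOn]
            · exact hkey u hu
            · intro w₁ h₁ w₂ h₂ he
              rcases Sym2.eq_iff.mp he with ⟨-, h⟩ | ⟨h, h'⟩
              · exact h
              · rw [← h, h']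
    · intro u hu u' hu' hne
      simp only [Finset.disjoint_left]
      intro e he he'
      obtain ⟨w, hw, rfl⟩ := Finset.mem_image.mp he
      obtain ⟨w', hw', heq⟩ := Finset.mem_image.mp he'
      rcases Sym2.eq_iff.mp heq with ⟨h, -⟩ | ⟨h, h'⟩
      · exact hne h.symm
      · exact hdisj u' hu' (h ▸ (Finset.mem_filter.mp hw).1)
  exact hcard.trans (Finset.card_le_card hTsub)

lemma arith_lemma (a b p i j q : ℕ) (hab : a ≤ b) (hpa : p ≤ a) (hij : i + j = p)
    (h1 : (a - i) * ((b - j) - 1) ≤ q) (h2 : (b - j) * ((a - i) - 1) ≤ q) :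
    (a - p) * (b - 1) ≤ q := by
  rcases Nat.eq_or_lt_of_le hpa with rfl | hpa'
  · simp
  have hia : i < a := by omega
  have hjb : j < b := by omega
  rcases Nat.eq_zero_or_pos j with rfl | hj1
  · have : p = i := by omega
    subst this
    simpa using h1
  by_cases hc : a - i ≤ b - j
  · refine le_trans ?_ h1
    zify [hia.le, hjb.le, hpa, (by omega : 1 ≤ b - j), (by omega : 1 ≤ b),
      (by omega : 1 ≤ a - i)] at *
    nlinarith [mul_nonneg (by omega : (0:ℤ) ≤ (j:ℤ)) (by linarith : (0:ℤ) ≤ (b:ℤ) + i - a - 1)]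
  · refine le_trans ?_ h2
    zify [hia.le, hjb.le, hpa, (by omega : 1 ≤ b - j), (by omega : 1 ≤ b),
      (by omega : 1 ≤ a - i)] at *
    nlinarith [mul_nonneg (by omega : (0:ℤ) ≤ (j:ℤ) - 1) (by omega : (0:ℤ) ≤ (b:ℤ) - a + i)]

/-- Lower bound: for any `p`-set of deleted vertices, at least `(a-p)(b-1)` edges
must be removed from the remaining induced graph. -/
lemma CE_lower (a b p : ℕ) (hab : a ≤ b) (hpa : p ≤ a)
    (V'' : Finset (Fin a ⊕ Fin b)) (hcard : V''.card = p) :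
    (a - p) * (b - 1) ≤
      CE ((completeBipartiteGraph (Fin a) (Fin b)).induce ((V'' : Set (Fin a ⊕ Fin b)))ᶜ) 2 := by
  classical
  set G := completeBipartiteGraph (Fin a) (Fin b) with hG
  set S : Set (Fin a ⊕ Fin b) := ((V'' : Set (Fin a ⊕ Fin b)))ᶜ with hS
  apply le_csInf (CE_set_nonempty _ le_rfl)
  rintro n ⟨E', hE, hcd, hfail⟩
  -- count deleted vertices on each side
  set Li : Finset (Fin a) := Finset.univ.filter (fun i => Sum.inl i ∈ V'') with hLi
  set Rj : Finset (Fin b) := Finset.univ.filter (fun j => Sum.inr j ∈ V'') with hRj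
  have hsplit : Li.card + Rj.card = p := by
    have hunion : V'' = Li.image Sum.inl ∪ Rj.image Sum.inr := by
      ext v
      cases v <;> simp [hLi, hRj]
    have hdis : Disjoint (Li.image Sum.inl) (Rj.image Sum.inr) := by
      rw [Finset.disjoint_left]
      rintro v hv hv'
      obtain ⟨i, -, rfl⟩ := Finset.mem_image.mp hv
      obtain ⟨j, -, h⟩ := Finset.mem_image.mp hv'
      exact Sum.inl_ne_inr h.symm
    rw [← hcard, hunion, Finset.card_union_of_disjoint hdis,
      Finset.card_image_of_injective _ Sum.inl_injective,
      Finset.card_image_of_injective _ Sum.inr_injective]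
  have hiL : Li.card ≤ a := le_trans (Finset.card_filter_le _ _) (by simp)
  have hjR : Rj.card ≤ b := le_trans (Finset.card_filter_le _ _) (by simp)
  -- the remaining vertices on each side
  set Ai : Finset (Fin a) := Finset.univ.filter (fun i => Sum.inl i ∉ V'') with hAi
  set Bj : Finset (Fin b) := Finset.univ.filter (fun j => Sum.inr j ∉ V'') with hBj
  have hAicard : Ai.card = a - Li.card := by
    have := Finset.card_filter_add_card_filter_not
      (s := (Finset.univ : Finset (Fin a))) (p := fun i => Sum.inl i ∈ V'')
    simp only [Finset.card_univ, Fintype.card_fin] at this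
    have h2 : (Finset.univ.filter (fun i : Fin a => ¬ Sum.inl i ∈ V'')).card = Ai.card := rfl
    have h3 : (Finset.univ.filter (fun i : Fin a => Sum.inl i ∈ V'')).card = Li.card := rfl
    omega
  have hBjcard : Bj.card = b - Rj.card := by
    have := Finset.card_filter_add_card_filter_not
      (s := (Finset.univ : Finset (Fin b))) (p := fun j => Sum.inr j ∈ V'')
    simp only [Finset.card_univ, Fintype.card_fin] at this
    have h2 : (Finset.univ.filter (fun j : Fin b => ¬ Sum.inr j ∈ V'')).card = Bj.card := rfl
    have h3 : (Finset.univ.filter (fun j : Fin b => Sum.inr j ∈ V'')).card = Rj.card := rfl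
    omega
  -- build the finsets in the subtype
  have hmemA : ∀ i ∈ Ai, (Sum.inl i : Fin a ⊕ Fin b) ∈ S := by
    intro i hi
    simp only [hS, Set.mem_compl_iff, Finset.coe_sort_coe, Finset.mem_coe]
    exact (Finset.mem_filter.mp hi).2
  have hmemB : ∀ j ∈ Bj, (Sum.inr j : Fin a ⊕ Fin b) ∈ S := by
    intro j hj
    simp only [hS, Set.mem_compl_iff, Finset.coe_sort_coe, Finset.mem_coe]
    exact (Finset.mem_filter.mp hj).2
  set A : Finset S := Ai.attach.image
    (fun i => (⟨Sum.inl i.1, hmemA i.1 i.2⟩ : S)) with hA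
  set B : Finset S := Bj.attach.image
    (fun j => (⟨Sum.inr j.1, hmemB j.1 j.2⟩ : S)) with hB
  have hAcard : A.card = a - Li.card := by
    rw [hA, Finset.card_image_of_injective, Finset.card_attach, hAicard]
    intro x y h
    apply Subtype.ext
    exact Sum.inl_injective (congrArg Subtype.val h)
  have hBcard : B.card = b - Rj.card := by
    rw [hB, Finset.card_image_of_injective, Finset.card_attach, hBjcard]
    intro x y h
    apply Subtype.ext
    exact Sum.inr_injective (congrArg Subtype.val h)
  have hAleft : ∀ u ∈ A, ((u : Fin a ⊕ Fin b)).isLeft = true := by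
    intro u hu
    obtain ⟨i, -, rfl⟩ := Finset.mem_image.mp hu
    rfl
  have hBright : ∀ w ∈ B, ((w : Fin a ⊕ Fin b)).isLeft = false := by
    intro w hw
    obtain ⟨j, -, rfl⟩ := Finset.mem_image.mp hw
    rfl
  have hadjAB : ∀ u ∈ A, ∀ w ∈ B, (G.induce S).Adj u w := by
    intro u hu w hw
    exact (cbg_adj (u : Fin a ⊕ Fin b) (w : Fin a ⊕ Fin b)).mpr
      (by rw [hAleft u hu, hBright w hw]; simp)
  have hnadjB : ∀ w₁ ∈ B, ∀ w₂ ∈ B, ¬ (G.induce S).Adj w₁ w₂ := by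
    intro w₁ h₁ w₂ h₂ hc
    have := (cbg_adj ((w₁ : Fin a ⊕ Fin b)) ((w₂ : Fin a ⊕ Fin b))).mp hc
    rw [hBright w₁ h₁, hBright w₂ h₂] at this
    exact this rfl
  have hnadjA : ∀ w₁ ∈ A, ∀ w₂ ∈ A, ¬ (G.induce S).Adj w₁ w₂ := by
    intro w₁ h₁ w₂ h₂ hc
    have := (cbg_adj ((w₁ : Fin a ⊕ Fin b)) ((w₂ : Fin a ⊕ Fin b))).mp hc
    rw [hAleft w₁ h₁, hAleft w₂ h₂] at this
    exact this rfl
  have h1 := count_lemma (G.induce S) E' hfail A B hadjAB hnadjB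
  have h2 := count_lemma (G.induce S) E' hfail B A
    (fun u hu w hw => (hadjAB w hw u hu).symm) hnadjA
  rw [hAcard, hBcard] at h1 h2
  rw [hcd] at h1 h2
  exact arith_lemma a b p Li.card Rj.card n hab hpa hsplit h1 h2

/-- The `k`-diameter component connectivity function of the
complete bipartite graph with part sizes `a ≤ b`. -/
theorem CM_completeBipartite (a b k p : ℕ) (ha : 0 < a) (hab : a ≤ b)
    (hk : 2 ≤ k)
    (hp : p ≤ CV (completeBipartiteGraph (Fin a) (Fin b)) k) :
    (a = 1 ∧ b = 1 → CM (completeBipartiteGraph (Fin a) (Fin b)) k p = 0) ∧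
    (2 < k → 1 < b → CM (completeBipartiteGraph (Fin a) (Fin b)) k p = 0) ∧
    (k = 2 → 1 < b →
      CM (completeBipartiteGraph (Fin a) (Fin b)) k p = (a - p) * (b - 1)) := by
  classical
  set G := completeBipartiteGraph (Fin a) (Fin b) with hG
  have hpa : p ≤ a := hp.trans (CV_le a b k hk)
  -- existence of a p-element vertex set
  obtain ⟨Vany, -, hVany⟩ := Finset.exists_subset_card_eq (s := (Finset.univ : Finset (Fin a ⊕ Fin b))) (n := p)
    (by simp [Fintype.card_fin]; omega)
  refine ⟨?_, ?_, ?_⟩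
  · -- a = b = 1
    rintro ⟨rfl, rfl⟩
    rw [CM, Nat.sInf_eq_zero]
    left
    refine ⟨Vany, hVany, CE_eq_zero_of_failure ?_⟩
    refine failure_mono (failure_of_matching ?_) hk
    intro x y z hxy hxz
    have h1 := (cbg_adj (x : Fin 1 ⊕ Fin 1) (y : Fin 1 ⊕ Fin 1)).mp hxy
    have h2 := (cbg_adj (x : Fin 1 ⊕ Fin 1) (z : Fin 1 ⊕ Fin 1)).mp hxz
    apply Subtype.ext
    have : ∀ u v : Fin 1 ⊕ Fin 1, u.isLeft = v.isLeft → u = v := by decide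
    apply this
    rcases Bool.eq_false_or_eq_true ((x : Fin 1 ⊕ Fin 1)).isLeft with hx | hx <;>
      rw [hx] at h1 h2 <;>
      simp only [ne_eq] at h1 h2 <;>
      rw [eq_comm (a := (y : Fin 1 ⊕ Fin 1).isLeft)] at * <;>
      cases hy : ((y : Fin 1 ⊕ Fin 1)).isLeft <;> cases hz : ((z : Fin 1 ⊕ Fin 1)).isLeft <;>
        simp_all
  · -- k > 2
    intro hk3 _
    rw [CM, Nat.sInf_eq_zero]
    left
    refine ⟨Vany, hVany, CE_eq_zero_of_failure ?_⟩
    exact failure_mono (cbg_induce_failure _) hk3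
  · -- k = 2
    rintro rfl hb
    -- the deleted vertex set: the first p left vertices
    set V1 : Finset (Fin a ⊕ Fin b) :=
      ((Finset.univ : Finset (Fin a)).filter (fun i : Fin a => (i : ℕ) < p)).image Sum.inl with hV1
    have hV1card : V1.card = p := by
      rw [hV1, Finset.card_image_of_injective _ Sum.inl_injective]
      rw [show ((Finset.univ : Finset (Fin a)).filter (fun i : Fin a => (i : ℕ) < p)) =
        Finset.map ⟨fun i : Fin p => Fin.castLE hpa i,
          fun x y h => Fin.castLE_injective hpa h⟩ Finset.univ from ?_]
      · simp
      · ext x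
        simp only [Finset.mem_filter, Finset.mem_univ, true_and, Finset.mem_map,
          Function.Embedding.coeFn_mk]
        constructor
        · intro hx
          exact ⟨⟨x, hx⟩, rfl⟩
        · rintro ⟨y, -, rfl⟩
          exact y.2
    set S : Set (Fin a ⊕ Fin b) := ((V1 : Set (Fin a ⊕ Fin b)))ᶜ with hS
    have hSr : ∀ j : Fin b, (Sum.inr j : Fin a ⊕ Fin b) ∈ S := by
      intro j
      simp [hS, hV1]
    have hSl : ∀ i : Fin a, (Sum.inl i : Fin a ⊕ Fin b) ∈ S ↔ p ≤ (i : ℕ) := by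
      intro i
      simp [hS, hV1, not_lt]
    -- the edge set to delete
    set T : Finset (Fin a × Fin b) :=
      ((Finset.univ.filter (fun i : Fin a => p ≤ (i : ℕ))) ×ˢ Finset.univ) \
        ((Finset.univ.filter (fun i : Fin a => p ≤ (i : ℕ))).image
          (fun i => (i, Fin.castLE hab i))) with hT
    have hmemT : ∀ x : Fin a × Fin b, x ∈ T ↔ p ≤ (x.1 : ℕ) ∧ (x.2 : ℕ) ≠ (x.1 : ℕ) := by
      rintro ⟨i, j⟩
      rw [hT, Finset.mem_sdiff, Finset.mem_product]
      simp only [Finset.mem_filter, Finset.mem_univ, true_and, and_true]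
      constructor
      · rintro ⟨hpi, hni⟩
        refine ⟨hpi, fun hc => hni ?_⟩
        refine Finset.mem_image.mpr ⟨i, by simp [hpi], ?_⟩
        exact Prod.ext rfl (Fin.ext hc.symm)
      · rintro ⟨hpi, hne⟩
        refine ⟨hpi, fun hc => ?_⟩
        obtain ⟨i', hi', heq⟩ := Finset.mem_image.mp hc
        have h1 : i' = i := congrArg Prod.fst heq
        have h2 : Fin.castLE hab i' = j := congrArg Prod.snd heq
        apply hne
        rw [← h2, h1]
        rfl
    have hTcard : T.card = (a - p) * (b - 1) := by
      have hfc : ((Finset.univ : Finset (Fin a)).filter (fun i : Fin a => p ≤ (i : ℕ))).card = a - p := by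
        have h := Finset.card_filter_add_card_filter_not
          (s := (Finset.univ : Finset (Fin a))) (p := fun i : Fin a => (i : ℕ) < p)
        have e1 : (Finset.univ.filter (fun i : Fin a => ¬ (i : ℕ) < p)) =
            (Finset.univ.filter (fun i : Fin a => p ≤ (i : ℕ))) := by
          apply Finset.filter_congr; intro x _; simp [not_lt]
        have e2 : ((Finset.univ : Finset (Fin a)).filter (fun i : Fin a => (i : ℕ) < p)).card = p := by
          have := hV1card
          rwa [hV1, Finset.card_image_of_injective _ Sum.inl_injective] at this
        rw [e1] at h
        simp only [Finset.card_univ, Fintype.card_fin] at h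
        omega
      rw [hT, Finset.card_sdiff_of_subset, Finset.card_product, Finset.card_image_of_injective,
        Finset.card_univ, Fintype.card_fin, hfc]
      · cases b with
        | zero => omega
        | succ b' => simp [Nat.succ_sub_one, Nat.mul_succ]
      · intro x y h
        exact (Prod.mk.injEq _ _ _ _ ▸ h).1
      · intro x hx
        obtain ⟨i, hi, rfl⟩ := Finset.mem_image.mp hx
        exact Finset.mem_product.mpr ⟨hi, Finset.mem_univ _⟩
    set f : {x // x ∈ T} → Sym2 S := fun x =>
      s((⟨Sum.inl x.1.1, (hSl x.1.1).mpr ((hmemT x.1).mp x.2).1⟩ : S),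
        (⟨Sum.inr x.1.2, hSr x.1.2⟩ : S)) with hf
    set E' : Finset (Sym2 S) := T.attach.image f with hE'
    have hfinj : Function.Injective f := by
      rintro ⟨⟨i, j⟩, hij⟩ ⟨⟨i', j'⟩, hij'⟩ h
      rw [hf] at h
      simp only at h
      rcases Sym2.eq_iff.mp h with ⟨h1, h2⟩ | ⟨h1, h2⟩
      · apply Subtype.ext
        have e1 := congrArg Subtype.val h1
        have e2 := congrArg Subtype.val h2
        exact Prod.ext (Sum.inl_injective e1) (Sum.inr_injective e2)
      · exact absurd (congrArg Subtype.val h1) (Sum.inl_ne_inr)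
    have hE'card : E'.card = (a - p) * (b - 1) := by
      rw [hE', Finset.card_image_of_injective _ hfinj, Finset.card_attach, hTcard]
    have hmemE' : ∀ (i : Fin a) (j : Fin b) (h1 : (Sum.inl i : Fin a ⊕ Fin b) ∈ S)
        (h2 : (Sum.inr j : Fin a ⊕ Fin b) ∈ S),
        s((⟨Sum.inl i, h1⟩ : S), (⟨Sum.inr j, h2⟩ : S)) ∈ E' ↔ (i, j) ∈ T := by
      intro i j h1 h2
      constructor
      · intro he
        obtain ⟨x, -, hx⟩ := Finset.mem_image.mp he
        rw [hf] at hx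
        rcases Sym2.eq_iff.mp hx with ⟨e1, e2⟩ | ⟨e1, e2⟩
        · have e1' := congrArg Subtype.val e1
          have e2' := congrArg Subtype.val e2
          have : x.1 = (i, j) := Prod.ext (Sum.inl_injective e1') (Sum.inr_injective e2')
          exact this ▸ x.2
        · exact absurd (congrArg Subtype.val e1) (Sum.inl_ne_inr)
      · intro ht
        exact Finset.mem_image.mpr ⟨⟨(i, j), ht⟩, Finset.mem_attach _ _, rfl⟩
    have hE'sub : (E' : Set (Sym2 S)) ⊆ (G.induce S).edgeSet := by
      intro e he
      obtain ⟨x, -, rfl⟩ := Finset.mem_image.mp (by exact_mod_cast he)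
      rw [hf, SimpleGraph.mem_edgeSet]
      exact (cbg_adj (Sum.inl x.1.1) (Sum.inr x.1.2)).mpr (by simp)
    -- the failure state of the constructed deletion
    have hfailE' : FailureState ((G.induce S).deleteEdges (E' : Set (Sym2 S))) 2 := by
      apply failure_of_matching
      rintro ⟨x, hx⟩ ⟨y, hy⟩ ⟨z, hz⟩ hxy hxz
      rw [SimpleGraph.deleteEdges_adj] at hxy hxz
      obtain ⟨haxy, hexy⟩ := hxy
      obtain ⟨haxz, hexz⟩ := hxz
      have hxy' := (cbg_adj x y).mp haxy
      have hxz' := (cbg_adj x z).mp haxz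
      rcases x with i | jx
      · -- x = inl i : y, z must be inr, matched to i
        have hpi : p ≤ (i : ℕ) := (hSl i).mp hx
        rcases y with iy | jy
        · exact absurd rfl hxy'
        rcases z with iz | jz
        · exact absurd rfl hxz'
        have hy' : ((jy : ℕ)) = (i : ℕ) := by
          by_contra hc
          exact hexy ((hmemE' i jy hx hy).mpr ((hmemT (i, jy)).mpr ⟨hpi, hc⟩))
        have hz' : ((jz : ℕ)) = (i : ℕ) := by
          by_contra hc
          exact hexz ((hmemE' i jz hx hz).mpr ((hmemT (i, jz)).mpr ⟨hpi, hc⟩))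
        apply Subtype.ext
        exact congrArg Sum.inr (Fin.ext (hy'.trans hz'.symm))
      · -- x = inr jx : y, z must be inl, matched to jx
        rcases y with iy | jy
        swap
        · exact absurd rfl hxy'
        rcases z with iz | jz
        swap
        · exact absurd rfl hxz'
        have hpy : p ≤ (iy : ℕ) := (hSl iy).mp hy
        have hpz : p ≤ (iz : ℕ) := (hSl iz).mp hz
        have hy' : ((jx : ℕ)) = (iy : ℕ) := by
          by_contra hc
          apply hexy
          rw [Sym2.eq_swap]
          exact (hmemE' iy jx hy hx).mpr ((hmemT (iy, jx)).mpr ⟨hpy, hc⟩)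
        have hz' : ((jx : ℕ)) = (iz : ℕ) := by
          by_contra hc
          apply hexz
          rw [Sym2.eq_swap]
          exact (hmemE' iz jx hz hx).mpr ((hmemT (iz, jx)).mpr ⟨hpz, hc⟩)
        apply Subtype.ext
        exact congrArg Sum.inl (Fin.ext (hy'.symm.trans hz'))
    -- CE of the constructed deletion equals the bound
    have hCE1 : CE (G.induce S) 2 = (a - p) * (b - 1) := by
      apply le_antisymm
      · apply Nat.sInf_le
        exact ⟨E', hE'sub, hE'card, hfailE'⟩
      · exact CE_lower a b p hab hpa V1 hV1card
    -- conclude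
    apply le_antisymm
    · apply Nat.sInf_le
      exact ⟨V1, hV1card, hCE1⟩
    · refine le_csInf ⟨(a - p) * (b - 1), V1, hV1card, hCE1⟩ ?_
      rintro n ⟨V'', hV''card, rfl⟩
      exact CE_lower a b p hab hpa V'' hV''card
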